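/- Case d = 1 (Bastianelli–Cortini–De Poi): Let r ≥ 1 and let Γ ⊆ ℙⁿ be a finite set satisfying CB(r) with |Γ| ≤ 2r + 1. Then Γ lies on a line (i.e., the linear span of Γ has dimension at most 1). -/
import Mathlib


open MvPolynomial

/-- A point of `ℙⁿ` over `k`, realized as the projectivization of `k^(n+1)`. -/
abbrev ProjSpace (k : Type*) [Field k] (n : ℕ) : Type _ :=
  Projectivization k (Fin (n + 1) → k)

/-- The projective linear subspace of `ℙⁿ` determined by a linear subspace
`W ⊆ k^(n+1)`, as a set of points. -/
def projSet {k : Type*} [Field k] {n : ℕ} (W : Submodule k (Fin (n + 1) → k)) :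
    Set (ProjSpace k n) :=
  {x | x.rep ∈ W}

/-- The Cayley–Bacharach condition `CB(r)`: every homogeneous polynomial of degree `r`
vanishing at all points of `Γ` except possibly one vanishes on all of `Γ`. -/
def IsCB {k : Type*} [Field k] {n : ℕ} (r : ℕ) (Γ : Set (ProjSpace k n)) : Prop :=
  ∀ F : MvPolynomial (Fin (n + 1)) k, F.IsHomogeneous r →
    ∀ x ∈ Γ, (∀ y ∈ Γ, y ≠ x → MvPolynomial.eval y.rep F = 0) →
      MvPolynomial.eval x.rep F = 0

/-- A plane configuration in `ℙⁿ`: a finite collection of distinct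
positive-dimensional projective linear subspaces. -/
structure PlaneConfig (k : Type*) [Field k] (n : ℕ) where
  length : ℕ
  P : Fin length → Submodule k (Fin (n + 1) → k)
  inj : Function.Injective P
  posdim : ∀ i, 2 ≤ Module.finrank k (P i)

namespace PlaneConfig

variable {k : Type*} [Field k] {n : ℕ}

/-- The dimension of a plane configuration: the sum of the (projective) dimensions
of its planes. -/
noncomputable def dim (C : PlaneConfig k n) : ℕ := ∑ i, (Module.finrank k (C.P i) - 1)

/-- The set of points of `ℙⁿ` lying on the configuration. -/
def points (C : PlaneConfig k n) : Set (ProjSpace k n) := ⋃ i, projSet (C.P i)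

/-- A configuration is skew if its planes are pairwise (projectively) disjoint. -/
def Skew (C : PlaneConfig k n) : Prop := ∀ i j, i ≠ j → C.P i ⊓ C.P j = ⊥

end PlaneConfig

section Aux

variable {k : Type*} [Field k] {n : ℕ}

/-- The degree-1 polynomial associated to a linear functional. -/
noncomputable def linPoly (f : Module.Dual k (Fin (n + 1) → k)) :
    MvPolynomial (Fin (n + 1)) k :=
  ∑ i, MvPolynomial.C (f (Pi.single i 1)) * MvPolynomial.X i

lemma linPoly_hom (f : Module.Dual k (Fin (n + 1) → k)) :
    (linPoly f).IsHomogeneous 1 :=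
  IsHomogeneous.sum _ _ _ fun i _ => isHomogeneous_C_mul_X _ i

lemma eval_linPoly (f : Module.Dual k (Fin (n + 1) → k)) (v : Fin (n + 1) → k) :
    eval v (linPoly f) = f v := by
  rw [LinearMap.pi_apply_eq_sum_univ f v]
  simp only [linPoly, map_sum, eval_mul, eval_C, eval_X, smul_eq_mul]
  refine Finset.sum_congr rfl fun i _ => ?_
  rw [mul_comm]
  congr 1
  congr 1
  ext j
  simp [Pi.single_apply, eq_comm]

lemma sep {W : Submodule k (Fin (n + 1) → k)} {v : Fin (n + 1) → k} (hv : v ∉ W) :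
    ∃ f : Module.Dual k (Fin (n + 1) → k), f v ≠ 0 ∧ ∀ w ∈ W, f w = 0 := by
  obtain ⟨f, hf1, hf2⟩ := W.exists_dual_map_eq_bot_of_notMem hv inferInstance
  refine ⟨f, hf1, fun w hw => ?_⟩
  have : f w ∈ W.map f := Submodule.mem_map_of_mem hw
  rwa [hf2, Submodule.mem_bot] at this

lemma proj_eq_of_mem_span {a b : ProjSpace k n}
    (h : a.rep ∈ Submodule.span k {b.rep}) : a = b := by
  rw [Submodule.mem_span_singleton] at h
  obtain ⟨c, hc⟩ := h
  conv_lhs => rw [← a.mk_rep]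
  conv_rhs => rw [← b.mk_rep]
  rw [Projectivization.mk_eq_mk_iff']
  exact ⟨c, hc⟩

lemma rep_notMem_span_singleton {a b : ProjSpace k n} (h : a ≠ b) :
    a.rep ∉ Submodule.span k {b.rep} := fun hm => h (proj_eq_of_mem_span hm)

lemma span_swap {x c d : ProjSpace k n} (hdx : d ≠ x)
    (h : d.rep ∈ Submodule.span k {x.rep, c.rep}) :
    Submodule.span k {x.rep, d.rep} = Submodule.span k {x.rep, c.rep} := by
  obtain ⟨α, β, hab⟩ := Submodule.mem_span_pair.mp h
  have hβ : β ≠ 0 := by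
    rintro rfl
    apply rep_notMem_span_singleton hdx
    rw [Submodule.mem_span_singleton]
    exact ⟨α, by rw [← hab]; simp⟩
  apply le_antisymm
  · rw [Submodule.span_le]
    rintro v hv
    rcases hv with rfl | hv
    · exact Submodule.subset_span (by simp)
    · rw [Set.mem_singleton_iff] at hv
      subst hv
      exact h
  · rw [Submodule.span_le]
    rintro v hv
    rcases hv with rfl | hv
    · exact Submodule.subset_span (by simp)
    · rw [Set.mem_singleton_iff] at hv
      subst hv
      refine Submodule.mem_span_pair.mpr ⟨-(β⁻¹ * α), β⁻¹, ?_⟩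
      rw [← hab, smul_add, smul_smul, smul_smul, neg_smul,
        inv_mul_cancel₀ hβ, one_smul]
      abel

lemma notMem_span_pair {x a b : ProjSpace k n} (hxa : x ≠ a) (hxb : x ≠ b)
    (hb : b.rep ∉ Submodule.span k {x.rep, a.rep}) :
    x.rep ∉ Submodule.span k {a.rep, b.rep} := by
  intro hx
  obtain ⟨α, β, hab⟩ := Submodule.mem_span_pair.mp hx
  by_cases hβ : β = 0
  · subst hβ
    apply rep_notMem_span_singleton hxa
    rw [Submodule.mem_span_singleton]
    exact ⟨α, by rw [← hab]; simp⟩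
  · apply hb
    refine Submodule.mem_span_pair.mpr ⟨β⁻¹, -(β⁻¹ * α), ?_⟩
    rw [← hab, smul_add, smul_smul, smul_smul, neg_smul,
      inv_mul_cancel₀ hβ, one_smul]
    abel

lemma prodForms {ι : Type*} (z : ProjSpace k n) (s : Finset ι)
    (W : ι → Submodule k (Fin (n + 1) → k)) (h : ∀ i ∈ s, z.rep ∉ W i)
    (m : ℕ) (hm : s.card ≤ m) :
    ∃ F : MvPolynomial (Fin (n + 1)) k, F.IsHomogeneous m ∧
      (∀ i ∈ s, ∀ v ∈ W i, eval v F = 0) ∧ eval z.rep F ≠ 0 := by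
  have hz : z.rep ∉ (⊥ : Submodule k (Fin (n + 1) → k)) := by
    simpa using z.rep_nonzero
  obtain ⟨g, hg, -⟩ := sep hz
  have hch : ∀ i : ι, ∃ f : Module.Dual k (Fin (n + 1) → k),
      i ∈ s → (f z.rep ≠ 0 ∧ ∀ w ∈ W i, f w = 0) := by
    intro i
    by_cases hi : i ∈ s
    · obtain ⟨f, h1, h2⟩ := sep (h i hi)
      exact ⟨f, fun _ => ⟨h1, h2⟩⟩
    · exact ⟨0, fun hmem => absurd hmem hi⟩
  choose f hf using hch
  refine ⟨(linPoly g) ^ (m - s.card) * ∏ i ∈ s, linPoly (f i), ?_, ?_, ?_⟩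
  · have h1 := (linPoly_hom g).pow (m - s.card)
    have h2 : (∏ i ∈ s, linPoly (f i)).IsHomogeneous s.card := by
      have := IsHomogeneous.prod s (fun i => linPoly (f i)) (fun _ => 1)
        (fun i _ => linPoly_hom (f i))
      simpa using this
    have h3 := h1.mul h2
    rw [one_mul] at h3
    rwa [Nat.sub_add_cancel hm] at h3
  · intro i hi v hv
    rw [map_mul, map_prod]
    have hzero : eval v (linPoly (f i)) = 0 := by
      rw [eval_linPoly]; exact (hf i hi).2 v hv
    rw [Finset.prod_eq_zero hi hzero, mul_zero]
  · rw [map_mul, map_pow, map_prod]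
    apply mul_ne_zero
    · apply pow_ne_zero; rw [eval_linPoly]; exact hg
    · rw [Finset.prod_ne_zero_iff]
      intro i hi
      rw [eval_linPoly]
      exact (hf i hi).1

lemma main_pairing (r : ℕ) (x : ProjSpace k n) (T : Finset (ProjSpace k n))
    (hxT : x ∉ T) (hcard : T.card ≤ 2 * r)
    (hcls : ∀ a ∈ T, ∀ s ⊆ T,
      (∀ b ∈ s, b.rep ∈ Submodule.span k {x.rep, a.rep}) → s.card ≤ r) :
    ∃ F : MvPolynomial (Fin (n + 1)) k, F.IsHomogeneous r ∧
      (∀ y ∈ T, eval y.rep F = 0) ∧ eval x.rep F ≠ 0 := by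
  classical
  induction r generalizing T with
  | zero =>
    have hT : T = ∅ := Finset.card_eq_zero.mp (Nat.le_zero.mp hcard)
    subst hT
    obtain ⟨F, h1, h2, h3⟩ := prodForms x (∅ : Finset (ProjSpace k n))
      (fun _ => (⊥ : Submodule k (Fin (n + 1) → k))) (by simp) 0 (by simp)
    exact ⟨F, h1, by simp, h3⟩
  | succ r IH =>
    rcases T.eq_empty_or_nonempty with rfl | hne
    · obtain ⟨F, h1, h2, h3⟩ := prodForms x (∅ : Finset (ProjSpace k n))
        (fun _ => (⊥ : Submodule k (Fin (n + 1) → k))) (by simp) (r + 1) (by simp)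
      exact ⟨F, h1, by simp, h3⟩
    · obtain ⟨a, haT, hamax⟩ := T.exists_max_image
        (fun c => (T.filter (fun d => d.rep ∈ Submodule.span k {x.rep, c.rep})).card) hne
      by_cases hall : ∀ b ∈ T, b.rep ∈ Submodule.span k {x.rep, a.rep}
      · -- all of T lies on one line through x : use singleton forms
        have hTcard : T.card ≤ r + 1 := hcls a haT T (Finset.Subset.refl T) hall
        obtain ⟨F, h1, h2, h3⟩ := prodForms x T (fun b => Submodule.span k {b.rep})
          (fun b hb => rep_notMem_span_singleton (fun he => hxT (he ▸ hb))) (r + 1) hTcard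
        exact ⟨F, h1, fun y hy => h2 y hy y.rep (Submodule.mem_span_singleton_self _), h3⟩
      · push_neg at hall
        obtain ⟨b, hbT, hbspan⟩ := hall
        have hxa : x ≠ a := fun he => hxT (he ▸ haT)
        have hxb : x ≠ b := fun he => hxT (he ▸ hbT)
        have hkey : x.rep ∉ Submodule.span k {a.rep, b.rep} :=
          notMem_span_pair hxa hxb hbspan
        obtain ⟨ℓ, hℓx, hℓ0⟩ := sep hkey
        have hab : a ≠ b := fun he =>
          hbspan (he ▸ Submodule.subset_span (by simp))
        have habT : ({a, b} : Finset (ProjSpace k n)) ⊆ T := by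
          intro c hc
          rcases Finset.mem_insert.mp hc with rfl | hc
          · exact haT
          · rw [Finset.mem_singleton] at hc; subst hc; exact hbT
        have hcard2 : ({a, b} : Finset (ProjSpace k n)).card = 2 := by
          rw [Finset.card_insert_of_notMem (by simpa using hab), Finset.card_singleton]
        set T' := T \ {a, b} with hT'def
        have hT'sub : T' ⊆ T := Finset.sdiff_subset
        have hxT' : x ∉ T' := fun hx => hxT (hT'sub hx)
        have hcardT' : T'.card ≤ 2 * r := by
          rw [hT'def, Finset.card_sdiff_of_subset habT, hcard2]
          omega
        have hcls' : ∀ c ∈ T', ∀ s ⊆ T',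
            (∀ d ∈ s, d.rep ∈ Submodule.span k {x.rep, c.rep}) → s.card ≤ r := by
          intro c hcT' s hsT' hscls
          have hcT : c ∈ T := hT'sub hcT'
          have hsT : s ⊆ T := hsT'.trans hT'sub
          by_cases hca : a.rep ∈ Submodule.span k {x.rep, c.rep}
          · have has : a ∉ s := by
              intro hs
              have := hsT' hs
              rw [hT'def, Finset.mem_sdiff] at this
              exact this.2 (by simp)
            have hins := hcls c hcT (insert a s) (Finset.insert_subset haT hsT)
              (by
                intro d hd
                rcases Finset.mem_insert.mp hd with rfl | hd
                · exact hca
                · exact hscls d hd)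
            rw [Finset.card_insert_of_notMem has] at hins
            omega
          · by_cases hcb : b.rep ∈ Submodule.span k {x.rep, c.rep}
            · have hbs : b ∉ s := by
                intro hs
                have := hsT' hs
                rw [hT'def, Finset.mem_sdiff] at this
                exact this.2 (by simp)
              have hins := hcls c hcT (insert b s) (Finset.insert_subset hbT hsT)
                (by
                  intro d hd
                  rcases Finset.mem_insert.mp hd with rfl | hd
                  · exact hcb
                  · exact hscls d hd)
              rw [Finset.card_insert_of_notMem hbs] at hins
              omega
            · by_contra hlt
              push_neg at hlt
              set fc := T.filter (fun d => d.rep ∈ Submodule.span k {x.rep, c.rep}) with hfc'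
              set fa := T.filter (fun d => d.rep ∈ Submodule.span k {x.rep, a.rep}) with hfa'
              have hsfc : s ⊆ fc := fun d hd =>
                Finset.mem_filter.mpr ⟨hsT hd, hscls d hd⟩
              have hfcge : r + 1 ≤ fc.card :=
                le_trans (by omega) (Finset.card_le_card hsfc)
              have hfage : r + 1 ≤ fa.card := le_trans hfcge (hamax c hcT)
              have hdisj : Disjoint fa fc := by
                rw [Finset.disjoint_left]
                intro d hdfa hdfc
                rw [hfa', Finset.mem_filter] at hdfa
                rw [hfc', Finset.mem_filter] at hdfc
                have hdx : d ≠ x := fun he => hxT (he ▸ hdfa.1)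
                have h1 := span_swap hdx hdfa.2
                have h2 := span_swap hdx hdfc.2
                apply hca
                rw [← h2, h1]
                exact Submodule.subset_span (by simp)
              have hbfa : b ∉ fa := fun hb' =>
                hbspan (Finset.mem_filter.mp hb').2
              have hbfc : b ∉ fc := fun hb' =>
                hcb (Finset.mem_filter.mp hb').2
              have hsub : insert b (fa ∪ fc) ⊆ T := by
                intro d hd
                rcases Finset.mem_insert.mp hd with rfl | hd
                · exact hbT
                · rcases Finset.mem_union.mp hd with hd | hd
                  · exact (Finset.mem_filter.mp hd).1
                  · exact (Finset.mem_filter.mp hd).1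
              have hle := Finset.card_le_card hsub
              rw [Finset.card_insert_of_notMem (by simp [hbfa, hbfc]),
                Finset.card_union_of_disjoint hdisj] at hle
              omega
        obtain ⟨F', hF1, hF2, hF3⟩ := IH T' hxT' hcardT' hcls'
        refine ⟨F' * linPoly ℓ, hF1.mul (linPoly_hom ℓ), ?_, ?_⟩
        · intro y hy
          rw [map_mul]
          by_cases hymem : y = a ∨ y = b
          · have hz : eval y.rep (linPoly ℓ) = 0 := by
              rw [eval_linPoly]
              apply hℓ0
              apply Submodule.subset_span
              rcases hymem with rfl | rfl <;> simp
            rw [hz, mul_zero]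
          · push_neg at hymem
            have hyT' : y ∈ T' := by
              rw [hT'def, Finset.mem_sdiff]
              exact ⟨hy, by simp [hymem.1, hymem.2]⟩
            rw [hF2 y hyT', zero_mul]
        · rw [map_mul, eval_linPoly]
          exact mul_ne_zero hF3 hℓx

end Aux

/-- Case `d = 1` (Bastianelli--Cortini--De Poi): a finite set satisfying `CB(r)` with at
most `2r + 1` points lies on a line. -/
theorem case_d_eq_one {k : Type*} [Field k] [Infinite k] {n : ℕ} (r : ℕ) (hr : 1 ≤ r)
    (Γ : Set (ProjSpace k n)) (hfin : Γ.Finite) (hCB : IsCB r Γ)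
    (hcard : Γ.ncard ≤ 2 * r + 1) :
    ∃ W : Submodule k (Fin (n + 1) → k),
      Module.finrank k W ≤ 2 ∧ Γ ⊆ projSet W := by
  classical
  rcases Set.eq_empty_or_nonempty Γ with rfl | ⟨x, hxΓ⟩
  · exact ⟨⊥, by simp, by simp⟩
  set Γf := hfin.toFinset with hΓf
  have hmem : ∀ y, y ∈ Γf ↔ y ∈ Γ := fun y => hfin.mem_toFinset
  have hcards : Γf.card ≤ 2 * r + 1 := by
    rw [hΓf, ← Set.ncard_eq_toFinset_card Γ hfin]
    exact hcard
  set T := Γf.erase x with hT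
  have hxT : x ∉ T := Finset.notMem_erase _ _
  have hTsub : T ⊆ Γf := Finset.erase_subset _ _
  have hTcard : T.card ≤ 2 * r := by
    rw [hT, Finset.card_erase_of_mem ((hmem x).mpr hxΓ)]
    omega
  by_cases hcls : ∀ a ∈ T, ∀ s ⊆ T,
      (∀ b ∈ s, b.rep ∈ Submodule.span k {x.rep, a.rep}) → s.card ≤ r
  · obtain ⟨F, h1, h2, h3⟩ := main_pairing r x T hxT hTcard hcls
    exact absurd (hCB F h1 x hxΓ (fun y hy hyx =>
      h2 y (Finset.mem_erase.mpr ⟨hyx, (hmem y).mpr hy⟩))) h3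
  · push_neg at hcls
    obtain ⟨a, haT, s, hsT, hscls, hslt⟩ := hcls
    set L := Submodule.span k {x.rep, a.rep} with hL
    have hxL : x.rep ∈ L := Submodule.subset_span (by simp)
    have hLrank : Module.finrank k L ≤ 2 := by
      have hset : ({x.rep, a.rep} : Set (Fin (n + 1) → k)) =
          ↑({x.rep, a.rep} : Finset (Fin (n + 1) → k)) := by simp
      rw [hL, hset]
      refine le_trans (finrank_span_finset_le_card _) ?_
      exact le_trans (Finset.card_insert_le _ _) (by simp)
    by_cases hsubL : ∀ y ∈ Γ, y.rep ∈ L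
    · exact ⟨L, hLrank, fun y hy => hsubL y hy⟩
    · push_neg at hsubL
      obtain ⟨z, hzΓ, hzL⟩ := hsubL
      exfalso
      set onL := Γf.filter (fun w => w.rep ∈ L) with honL'
      set offL := Γf.filter (fun w => w.rep ∉ L) with hoffL'
      have honoff : onL.card + offL.card = Γf.card :=
        Finset.card_filter_add_card_filter_not _
      have hxs : x ∉ s := fun h => hxT (hsT h)
      have hin : insert x s ⊆ onL := by
        intro w hw
        rcases Finset.mem_insert.mp hw with rfl | hw
        · exact Finset.mem_filter.mpr ⟨(hmem w).mpr hxΓ, hxL⟩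
        · exact Finset.mem_filter.mpr ⟨hTsub (hsT hw), hscls w hw⟩
      have honLge : r + 2 ≤ onL.card := by
        have hle := Finset.card_le_card hin
        rw [Finset.card_insert_of_notMem hxs] at hle
        omega
      have hzoff : z ∈ offL := Finset.mem_filter.mpr ⟨(hmem z).mpr hzΓ, hzL⟩
      have hofferase : (offL.erase z).card + 1 = offL.card :=
        Finset.card_erase_add_one hzoff
      set s' := insert x (offL.erase z) with hs''
      have hxoff : x ∉ offL.erase z := by
        intro hx
        exact (Finset.mem_filter.mp (Finset.erase_subset _ _ hx)).2 hxL
      have hs'card : s'.card ≤ r := by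
        rw [hs'', Finset.card_insert_of_notMem hxoff]
        omega
      set W : ProjSpace k n → Submodule k (Fin (n + 1) → k) :=
        fun p => if p = x then L else Submodule.span k {p.rep} with hW'
      have hW : ∀ i ∈ s', z.rep ∉ W i := by
        intro i hi
        by_cases hix' : i = x
        · rw [show W i = L by simp [W, hix']]; exact hzL
        · have hi' : i ∈ offL.erase z := by
            rcases Finset.mem_insert.mp hi with h | h
            · exact absurd h hix'
            · exact h
          have hiL : i.rep ∉ L := (Finset.mem_filter.mp (Finset.erase_subset _ _ hi')).2
          have hix : i ≠ x := fun he => hiL (he ▸ hxL)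
          have hzi : z ≠ i := fun he => (Finset.ne_of_mem_erase hi') he.symm
          simp only [W, if_neg hix]
          exact rep_notMem_span_singleton hzi
      obtain ⟨F, h1, h2, h3⟩ := prodForms z s' W hW r hs'card
      apply h3
      apply hCB F h1 z hzΓ
      intro y hyΓ hyz
      by_cases hyL : y.rep ∈ L
      · exact h2 x (Finset.mem_insert_self _ _) y.rep
          (by rw [show W x = L by simp [W]]; exact hyL)
      · have hyoff : y ∈ offL.erase z :=
          Finset.mem_erase.mpr ⟨hyz, Finset.mem_filter.mpr ⟨(hmem y).mpr hyΓ, hyL⟩⟩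
        have hyx : y ≠ x := fun he => hyL (he ▸ hxL)
        exact h2 y (Finset.mem_insert_of_mem hyoff) y.rep
          (by simp only [W, if_neg hyx]; exact Submodule.mem_span_singleton_self _)
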